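/- Let θ ≥ 2 be an integer and β > 0. Then the one-sided derivatives of h ↦ z(β,h) at h = 0 exist and satisfy lim_{h↓0} (z(β,h) − z(β,0))/h = x_1^↑(β) − 1/θ and lim_{h↑0} (z(β,h) − z(β,0))/h = x_θ^↓(β) − 1/θ. -/

import Mathlib

open Filter Topology

def simplexOrd (θ : ℕ) : Set (Fin θ → ℝ) :=
  {x | (∀ i j : Fin θ, i ≤ j → x j ≤ x i) ∧ (∀ i, 0 ≤ x i) ∧ ∑ i, x i = 1}

noncomputable def phiFE (θ : ℕ) (β : ℝ) (x : Fin θ → ℝ) : ℝ :=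
  β / 2 * ((∑ i, (x i) ^ 2) - 1) - ∑ i, x i * Real.log (x i)

def domR (θ : ℕ) (y x : Fin θ → ℝ) : Prop :=
  ∀ j : Fin θ, (∑ i ∈ Finset.univ.filter (fun i : Fin θ => i ≤ j), x i)
    ≤ ∑ i ∈ Finset.univ.filter (fun i : Fin θ => i ≤ j), y i

def domSet (θ : ℕ) (x : Fin θ → ℝ) : Set (Fin θ → ℝ) :=
  {y ∈ simplexOrd θ | domR θ y x}

def maxSet (θ : ℕ) (β : ℝ) : Set (Fin θ → ℝ) :=
  {x ∈ simplexOrd θ | ∀ y ∈ simplexOrd θ, phiFE θ β y ≤ phiFE θ β x}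

lemma isClosed_simplexOrd (θ : ℕ) : IsClosed (simplexOrd θ) := by
  have : simplexOrd θ = (⋂ i, ⋂ j, {x : Fin θ → ℝ | i ≤ j → x j ≤ x i}) ∩
      ((⋂ i, {x : Fin θ → ℝ | 0 ≤ x i}) ∩ {x : Fin θ → ℝ | ∑ i, x i = 1}) := by
    ext x; simp [simplexOrd, Set.mem_iInter]
  rw [this]
  refine (isClosed_iInter fun i => isClosed_iInter fun j => ?_).inter
    ((isClosed_iInter fun i => isClosed_le continuous_const (continuous_apply i)).inter
      (isClosed_eq (by fun_prop) continuous_const))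
  by_cases h : i ≤ j
  · simp only [h, true_implies]
    exact isClosed_le (continuous_apply j) (continuous_apply i)
  · simp only [h, false_implies, Set.setOf_true]
    exact isClosed_univ

lemma coord_le_one {θ : ℕ} {x : Fin θ → ℝ} (hx : x ∈ simplexOrd θ) (i : Fin θ) : x i ≤ 1 := by
  have h := Finset.single_le_sum (f := x) (fun j _ => hx.2.1 j) (Finset.mem_univ i)
  rw [hx.2.2] at h; exact h

lemma isCompact_simplexOrd (θ : ℕ) : IsCompact (simplexOrd θ) := by
  refine Metric.isCompact_of_isClosed_isBounded (isClosed_simplexOrd θ) ?_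
  refine (Metric.isBounded_closedBall (x := (0 : Fin θ → ℝ)) (r := 1)).subset ?_
  intro x hx
  rw [Metric.mem_closedBall, dist_zero_right]
  refine (pi_norm_le_iff_of_nonneg zero_le_one).2 fun i => ?_
  rw [Real.norm_eq_abs, abs_le]
  exact ⟨by linarith [hx.2.1 i], coord_le_one hx i⟩

lemma continuous_phiFE (θ : ℕ) (β : ℝ) : Continuous (phiFE θ β) := by
  unfold phiFE
  refine Continuous.sub (continuous_const.mul ?_) ?_
  · exact (continuous_finset_sum _ fun i _ => (continuous_apply i).pow 2).sub continuous_const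
  · exact continuous_finset_sum _ fun i _ =>
      Real.continuous_mul_log.comp (continuous_apply i)

lemma domR_first {θ : ℕ} (hθ : 2 ≤ θ) {x y : Fin θ → ℝ} (hd : domR θ y x) :
    x ⟨0, Nat.lt_of_lt_of_le (by norm_num) hθ⟩ ≤ y ⟨0, Nat.lt_of_lt_of_le (by norm_num) hθ⟩ := by
  have h := hd ⟨0, Nat.lt_of_lt_of_le (by norm_num) hθ⟩
  have hfil : Finset.univ.filter (fun i : Fin θ => i ≤ ⟨0, Nat.lt_of_lt_of_le (by norm_num) hθ⟩)
      = {(⟨0, Nat.lt_of_lt_of_le (by norm_num) hθ⟩ : Fin θ)} := by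
    ext i
    simp only [Finset.mem_filter, Finset.mem_univ, true_and, Finset.mem_singleton,
      Fin.le_def, Fin.ext_iff]
    omega
  rw [hfil] at h
  simpa using h

lemma domR_last {θ : ℕ} (hθ : 2 ≤ θ) {x y : Fin θ → ℝ}
    (hx : x ∈ simplexOrd θ) (hy : y ∈ simplexOrd θ) (hd : domR θ y x) :
    y ⟨θ - 1, Nat.sub_lt (Nat.lt_of_lt_of_le (by norm_num) hθ) one_pos⟩ ≤ x ⟨θ - 1, Nat.sub_lt (Nat.lt_of_lt_of_le (by norm_num) hθ) one_pos⟩ := by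
  have h := hd ⟨θ - 2, by omega⟩
  have hfil : Finset.univ.filter (fun i : Fin θ => i ≤ ⟨θ - 2, by omega⟩)
      = Finset.univ.erase (⟨θ - 1, Nat.sub_lt (Nat.lt_of_lt_of_le (by norm_num) hθ) one_pos⟩ : Fin θ) := by
    ext i
    have hi := i.isLt
    simp only [Finset.mem_filter, Finset.mem_univ, true_and, Finset.mem_erase, and_true,
      Fin.le_def, Fin.ext_iff, ne_eq]
    omega
  rw [hfil] at h
  have hxs := Finset.add_sum_erase Finset.univ x (Finset.mem_univ (⟨θ - 1, Nat.sub_lt (Nat.lt_of_lt_of_le (by norm_num) hθ) one_pos⟩ : Fin θ))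
  have hys := Finset.add_sum_erase Finset.univ y (Finset.mem_univ (⟨θ - 1, Nat.sub_lt (Nat.lt_of_lt_of_le (by norm_num) hθ) one_pos⟩ : Fin θ))
  rw [hx.2.2] at hxs
  rw [hy.2.2] at hys
  linarith

/-- the one-sided derivatives of `h ↦ z(β,h)` at `h = 0` exist and equal
`x_1^↑(β) − 1/θ` (right) and `x_θ^↓(β) − 1/θ` (left). -/
theorem stmt10 (θ : ℕ) (hθ : 2 ≤ θ) (β : ℝ) (hβ : 0 < β)
    (g : (Fin θ → ℝ) → ℝ)
    (hg : ∀ x ∈ simplexOrd θ, IsGreatest (phiFE θ β '' domSet θ x) (g x))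
    (z : ℝ → ℝ)
    (hz1 : ∀ h : ℝ, 0 ≤ h → IsGreatest
      ((fun x : Fin θ → ℝ => h * (x ⟨0, by omega⟩ - 1 / (θ : ℝ)) + g x) '' simplexOrd θ) (z h))
    (hz2 : ∀ h : ℝ, h ≤ 0 → IsGreatest
      ((fun x : Fin θ → ℝ => h * (x ⟨θ - 1, by omega⟩ - 1 / (θ : ℝ)) + g x) '' simplexOrd θ)
      (z h))
    (x1up : ℝ)
    (hx1up : IsGreatest ((fun x : Fin θ → ℝ => x ⟨0, by omega⟩) '' maxSet θ β) x1up)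
    (xthdown : ℝ)
    (hxth : IsLeast ((fun x : Fin θ → ℝ => x ⟨θ - 1, by omega⟩) '' maxSet θ β) xthdown) :
    Tendsto (fun h : ℝ => (z h - z 0) / h) (nhdsWithin 0 (Set.Ioi 0))
        (nhds (x1up - 1 / (θ : ℝ))) ∧
    Tendsto (fun h : ℝ => (z h - z 0) / h) (nhdsWithin 0 (Set.Iio 0))
        (nhds (xthdown - 1 / (θ : ℝ))) := by
  have i0 : Fin θ := ⟨0, by omega⟩
  -- basic facts about g and z 0
  have hphi_le_g : ∀ x ∈ simplexOrd θ, phiFE θ β x ≤ g x := fun x hx =>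
    (hg x hx).2 ⟨x, ⟨hx, fun j => le_refl _⟩, rfl⟩
  have hg_le_z0 : ∀ x ∈ simplexOrd θ, g x ≤ z 0 := by
    intro x hx
    have h := (hz1 0 le_rfl).2 ⟨x, hx, rfl⟩
    simpa using h
  have hphi_le_z0 : ∀ x ∈ simplexOrd θ, phiFE θ β x ≤ z 0 := fun x hx =>
    (hphi_le_g x hx).trans (hg_le_z0 x hx)
  -- z 0 is attained by phi at some point of the simplex
  have hz0_attained : ∃ y ∈ simplexOrd θ, phiFE θ β y = z 0 := by
    obtain ⟨x₀, hx₀, hx₀eq⟩ := (hz1 0 le_rfl).1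
    obtain ⟨y₀, hy₀, hy₀eq⟩ := (hg x₀ hx₀).1
    exact ⟨y₀, hy₀.1, by simp at hx₀eq; rw [hy₀eq, hx₀eq]⟩
  -- maximizers have phi = z 0 and g = z 0
  have hmax_vals : ∀ x ∈ maxSet θ β, phiFE θ β x = z 0 ∧ g x = z 0 := by
    intro x hx
    obtain ⟨y₀, hy₀, hy₀eq⟩ := hz0_attained
    have h1 : z 0 ≤ phiFE θ β x := hy₀eq ▸ hx.2 y₀ hy₀
    have h2 : phiFE θ β x ≤ g x := hphi_le_g x hx.1
    have h3 : g x ≤ z 0 := hg_le_z0 x hx.1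
    exact ⟨le_antisymm (by linarith) h1, le_antisymm h3 (by linarith)⟩
  -- the key semicontinuity / compactness lemma
  have key : ∀ (f : (Fin θ → ℝ) → ℝ), Continuous f → ∀ c : ℝ,
      (∀ x ∈ simplexOrd θ, ∀ y ∈ maxSet θ β, domR θ y x → f x ≤ c) →
      ∀ ε > (0 : ℝ), ∃ δ > (0 : ℝ), ∀ x ∈ simplexOrd θ, z 0 - δ ≤ g x → f x ≤ c + ε := by
    intro f hf c hfc ε hε
    by_contra hcon
    push_neg at hcon
    have hseq : ∀ n : ℕ, ∃ x ∈ simplexOrd θ, z 0 - 1 / (n + 1) ≤ g x ∧ c + ε < f x := by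
      intro n
      exact hcon (1 / (n + 1)) (by positivity)
    choose xs hxs1 hxs2 hxs3 using hseq
    have hys : ∀ n : ℕ, ∃ y ∈ domSet θ (xs n), phiFE θ β y = g (xs n) := fun n =>
      (hg (xs n) (hxs1 n)).1
    choose ys hys1 hys2 using hys
    have hcomp := isCompact_simplexOrd θ
    obtain ⟨⟨x, y⟩, hxy, σ, hσ, hlim⟩ := (hcomp.prod hcomp).tendsto_subseq
      (x := fun n => (xs n, ys n)) (fun n => Set.mk_mem_prod (hxs1 n) (hys1 n).1)
    have htx : Tendsto (fun n => xs (σ n)) atTop (𝓝 x) :=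
      (continuous_fst.tendsto _).comp hlim
    have hty : Tendsto (fun n => ys (σ n)) atTop (𝓝 y) :=
      (continuous_snd.tendsto _).comp hlim
    have hxΔ : x ∈ simplexOrd θ := hxy.1
    have hyΔ : y ∈ simplexOrd θ := hxy.2
    -- g (xs (σ n)) → z 0
    have hinv : Tendsto (fun n : ℕ => 1 / ((σ n : ℝ) + 1)) atTop (𝓝 0) :=
      tendsto_one_div_add_atTop_nhds_zero_nat.comp hσ.tendsto_atTop
    have hgz : Tendsto (fun n => g (xs (σ n))) atTop (𝓝 (z 0)) := by
      refine tendsto_of_tendsto_of_tendsto_of_le_of_le ?_ ?_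
        (fun n => hxs2 (σ n)) (fun n => hg_le_z0 _ (hxs1 (σ n)))
      · simpa using (tendsto_const_nhds (x := z 0)).sub hinv
      · exact tendsto_const_nhds
    -- phi y = z 0
    have hphiy : phiFE θ β y = z 0 := by
      have h1 : Tendsto (fun n => phiFE θ β (ys (σ n))) atTop (𝓝 (phiFE θ β y)) :=
        ((continuous_phiFE θ β).tendsto y).comp hty
      have h2 : Tendsto (fun n => phiFE θ β (ys (σ n))) atTop (𝓝 (z 0)) := by
        simpa only [hys2] using hgz
      exact tendsto_nhds_unique h1 h2
    have hymax : y ∈ maxSet θ β := by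
      refine ⟨hyΔ, fun w hw => ?_⟩
      rw [hphiy]
      exact hphi_le_z0 w hw
    -- domR y x
    have hdom : domR θ y x := by
      intro j
      have hS : Continuous fun v : Fin θ → ℝ =>
          ∑ i ∈ Finset.univ.filter (fun i : Fin θ => i ≤ j), v i :=
        continuous_finset_sum _ fun i _ => continuous_apply i
      exact le_of_tendsto_of_tendsto' ((hS.tendsto x).comp htx) ((hS.tendsto y).comp hty)
        (fun n => (hys1 (σ n)).2 j)
    -- contradiction
    have hfx : c + ε ≤ f x :=
      ge_of_tendsto ((hf.tendsto x).comp htx) (Eventually.of_forall fun n => (hxs3 (σ n)).le)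
    have := hfc x hxΔ y hymax hdom
    linarith
  -- data for the right limit
  obtain ⟨xstar, hxstar_max, hxstar0⟩ := hx1up.1
  have hxstarΔ : xstar ∈ simplexOrd θ := hxstar_max.1
  have hgxstar : g xstar = z 0 := (hmax_vals xstar hxstar_max).2
  have hx1up_nonneg : 0 ≤ x1up := hxstar0 ▸ hxstarΔ.2.1 _
  have hx1up_le_one : x1up ≤ 1 := hxstar0 ▸ coord_le_one hxstarΔ _
  -- data for the left limit
  obtain ⟨xflat, hxflat_max, hxflatL⟩ := hxth.1
  have hxflatΔ : xflat ∈ simplexOrd θ := hxflat_max.1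
  have hgxflat : g xflat = z 0 := (hmax_vals xflat hxflat_max).2
  have hxth_nonneg : 0 ≤ xthdown := hxflatL ▸ hxflatΔ.2.1 _
  have hxth_le_one : xthdown ≤ 1 := hxflatL ▸ coord_le_one hxflatΔ _
  constructor
  · -- right limit
    rw [Metric.tendsto_nhdsWithin_nhds]
    intro ε hε
    obtain ⟨δ, hδ, hkey⟩ := key (fun x => x ⟨0, by omega⟩) (continuous_apply _) x1up
      (fun x hx y hy hd => (domR_first hθ hd).trans (hx1up.2 ⟨y, hy, rfl⟩)) (ε / 2)
      (by linarith)
    refine ⟨δ, hδ, fun h hh hdist => ?_⟩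
    have hhp : 0 < h := hh
    have hhδ : h < δ := by
      rw [Real.dist_eq] at hdist
      have := abs_lt.1 hdist
      linarith [this.2]
    -- lower bound on z h
    have hzlow : h * (x1up - 1 / (θ : ℝ)) + z 0 ≤ z h := by
      have h1 : h * (xstar ⟨0, by omega⟩ - 1 / (θ : ℝ)) + g xstar ≤ z h :=
        (hz1 h hhp.le).2 ⟨xstar, hxstarΔ, rfl⟩
      have h2 : xstar ⟨0, by omega⟩ = x1up := hxstar0
      rw [← h2, ← hgxstar]
      exact h1
    -- maximizer for z h
    obtain ⟨xh, hxhΔ, hxheq⟩ := (hz1 h hhp.le).1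
    have hgxh_le : g xh ≤ z 0 := hg_le_z0 xh hxhΔ
    have hxh0_le : xh ⟨0, by omega⟩ ≤ 1 := coord_le_one hxhΔ _
    have hgxh_ge : z 0 - δ ≤ g xh := by
      nlinarith [hxheq, hzlow, mul_nonneg hhp.le (by linarith : (0:ℝ) ≤ x1up - xh ⟨0, by omega⟩ + 1)]
    have hxh0 : xh ⟨0, by omega⟩ ≤ x1up + ε / 2 := hkey xh hxhΔ hgxh_ge
    -- the two bounds on the quotient
    have qlow : x1up - 1 / (θ : ℝ) ≤ (z h - z 0) / h := by
      rw [le_div_iff₀ hhp]; linarith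
    have qhigh : (z h - z 0) / h ≤ x1up - 1 / (θ : ℝ) + ε / 2 := by
      rw [div_le_iff₀ hhp]; nlinarith
    rw [Real.dist_eq, abs_lt]
    constructor <;> linarith
  · -- left limit
    rw [Metric.tendsto_nhdsWithin_nhds]
    intro ε hε
    obtain ⟨δ, hδ, hkey⟩ := key (fun x => -(x ⟨θ - 1, by omega⟩)) (continuous_apply _).neg
      (-xthdown)
      (fun x hx y hy hd => by
        have h1 := domR_last hθ hx hy.1 hd
        have h2 := hxth.2 ⟨y, hy, rfl⟩
        simp only [neg_le_neg_iff]
        linarith) (ε / 2) (by linarith)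
    refine ⟨δ, hδ, fun h hh hdist => ?_⟩
    have hhn : h < 0 := hh
    have hhδ : -h < δ := by
      rw [Real.dist_eq] at hdist
      have := abs_lt.1 hdist
      linarith [this.1]
    have hzlow : h * (xthdown - 1 / (θ : ℝ)) + z 0 ≤ z h := by
      have h1 : h * (xflat ⟨θ - 1, by omega⟩ - 1 / (θ : ℝ)) + g xflat ≤ z h :=
        (hz2 h hhn.le).2 ⟨xflat, hxflatΔ, rfl⟩
      have h2 : xflat ⟨θ - 1, by omega⟩ = xthdown := hxflatL
      rw [← h2, ← hgxflat]
      exact h1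
    obtain ⟨xh, hxhΔ, hxheq⟩ := (hz2 h hhn.le).1
    have hgxh_le : g xh ≤ z 0 := hg_le_z0 xh hxhΔ
    have hxhL_le : xh ⟨θ - 1, by omega⟩ ≤ 1 := coord_le_one hxhΔ _
    have hxhL_nn : 0 ≤ xh ⟨θ - 1, by omega⟩ := hxhΔ.2.1 _
    have hgxh_ge : z 0 - δ ≤ g xh := by
      nlinarith [hxheq, hzlow,
        mul_nonneg (by linarith : (0:ℝ) ≤ -h)
          (by linarith : (0:ℝ) ≤ 1 - (xthdown - xh ⟨θ - 1, by omega⟩))]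
    have hxhL : xthdown - ε / 2 ≤ xh ⟨θ - 1, by omega⟩ := by
      have := hkey xh hxhΔ hgxh_ge
      linarith
    have qhigh : (z h - z 0) / h ≤ xthdown - 1 / (θ : ℝ) := by
      rw [div_le_iff_of_neg hhn]; linarith
    have qlow : xthdown - 1 / (θ : ℝ) - ε / 2 ≤ (z h - z 0) / h := by
      rw [le_div_iff_of_neg hhn]; nlinarith
    rw [Real.dist_eq, abs_lt]
    constructor <;> linarith
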